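/- Let Σ be a finite alphabet with |Σ| ≥ 2 and let L ⊆ Σ* be a nonempty finite language whose Myhill–Nerode equivalence ≡_L has exactly m equivalence classes on Σ* (i.e., the minimal DFA accepting L has m states). If a 1QFAC over Σ with k classical states recognizes L with cut-point λ isolated by ε for some λ ∈ (0,1) and ε > 0, then m ≤ 2|Σ|^{k−2}. -/

import Mathlib

noncomputable section

/-- The `n`-dimensional complex Hilbert space `ℂⁿ`. -/
abbrev QState (n : ℕ) := EuclideanSpace ℂ (Fin n)

/-- Apply a matrix to a vector of `ℂⁿ`. -/
def mApply {n : ℕ} (M : Matrix (Fin n) (Fin n) ℂ) (v : QState n) : QState n :=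
  Matrix.toEuclideanLin M v

/-- Myhill–Nerode equivalence: `x ≡_L y` iff `∀ z, xz ∈ L ↔ yz ∈ L`. -/
def mnEquiv {α : Type} (L : Set (List α)) (x y : List α) : Prop :=
  ∀ z : List α, x ++ z ∈ L ↔ y ++ z ∈ L

/-- Myhill–Nerode equivalence as a setoid. -/
def mnSetoid {α : Type} (L : Set (List α)) : Setoid (List α) where
  r := mnEquiv L
  iseqv := ⟨fun _ _ => Iff.rfl, fun h z => (h z).symm, fun h1 h2 z => (h1 z).trans (h2 z)⟩

/-- A 1QFAC: classical states `S` with initial state and transitions, an `n`-dimensional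
quantum part with a unit initial vector, a unitary for each (classical state, letter),
and an orthogonal projection (accepting measurement) for each classical state. -/
structure QFAC (Alph : Type) (S : Type) (n : ℕ) where
  s0 : S
  tr : S → Alph → S
  ψ0 : QState n
  ψ0_unit : ‖ψ0‖ = 1
  U : S → Alph → Matrix (Fin n) (Fin n) ℂ
  U_unitary : ∀ s σ, U s σ ∈ Matrix.unitaryGroup (Fin n) ℂ
  P : S → Matrix (Fin n) (Fin n) ℂ
  P_proj : ∀ s, (P s).conjTranspose = P s ∧ P s * P s = P s

namespace QFAC
variable {Alph S : Type} {n : ℕ}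

/-- `s_x`: the classical state reached after reading `x`. -/
def sState (A : QFAC Alph S n) (x : List Alph) : S := x.foldl A.tr A.s0

/-- `|ψ_x⟩`: the final quantum state after reading `x`. -/
def qState (A : QFAC Alph S n) (x : List Alph) : QState n :=
  (x.foldl (fun p σ => (A.tr p.1 σ, mApply (A.U p.1 σ) p.2)) (A.s0, A.ψ0)).2

/-- Acceptance probability `‖P_{s_x,acc}|ψ_x⟩‖²`. -/
def probAcc (A : QFAC Alph S n) (x : List Alph) : ℝ :=
  ‖mApply (A.P (A.sState x)) (A.qState x)‖ ^ 2

/-- Recognition with cut-point `lam` isolated by `ε`. -/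
def Recognizes (A : QFAC Alph S n) (L : Set (List Alph)) (lam ε : ℝ) : Prop :=
  (∀ x ∈ L, lam + ε ≤ A.probAcc x) ∧ (∀ x ∉ L, A.probAcc x ≤ lam - ε)

end QFAC

namespace QFACAux

section Norms
variable {n : ℕ}

lemma mApply_mul (M N : Matrix (Fin n) (Fin n) ℂ) (v : QState n) :
    mApply (M * N) v = mApply M (mApply N v) := by
  simp [mApply, Matrix.toEuclideanLin_apply, Matrix.mulVec_mulVec]

lemma mApply_one (v : QState n) : mApply 1 v = v := by
  simp [mApply, Matrix.toEuclideanLin_apply]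

lemma mApply_sub (M : Matrix (Fin n) (Fin n) ℂ) (a b : QState n) :
    mApply M (a - b) = mApply M a - mApply M b := by
  simp [mApply]

lemma inner_mApply (M : Matrix (Fin n) (Fin n) ℂ) (a b : QState n) :
    inner ℂ (mApply M a) b = (inner ℂ a (mApply M.conjTranspose b) : ℂ) := by
  rw [mApply, mApply, Matrix.toEuclideanLin_conjTranspose_eq_adjoint,
    LinearMap.adjoint_inner_right]

lemma norm_mApply_unitary {M : Matrix (Fin n) (Fin n) ℂ}
    (hM : M ∈ Matrix.unitaryGroup (Fin n) ℂ) (v : QState n) :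
    ‖mApply M v‖ = ‖v‖ := by
  have h1 : M.conjTranspose * M = 1 := hM.1
  have h : (inner ℂ (mApply M v) (mApply M v) : ℂ) = inner ℂ v v := by
    rw [inner_mApply, ← mApply_mul, h1, mApply_one]
  rw [inner_self_eq_norm_sq_to_K, inner_self_eq_norm_sq_to_K] at h
  have h2 : ‖mApply M v‖ ^ 2 = ‖v‖ ^ 2 := by exact_mod_cast h
  nlinarith [norm_nonneg (mApply M v), norm_nonneg v]

lemma norm_mApply_proj_le {M : Matrix (Fin n) (Fin n) ℂ}
    (h1 : M.conjTranspose = M) (h2 : M * M = M) (v : QState n) :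
    ‖mApply M v‖ ≤ ‖v‖ := by
  have key : (inner ℂ (mApply M v) (mApply M v) : ℂ) = inner ℂ v (mApply M v) := by
    rw [inner_mApply, h1, ← mApply_mul, h2]
  have h3 : ‖mApply M v‖ ^ 2 = ‖(inner ℂ v (mApply M v) : ℂ)‖ := by
    rw [inner_self_eq_norm_sq_to_K] at key
    rw [← key, norm_pow]
    norm_num
  have h4 : ‖(inner ℂ v (mApply M v) : ℂ)‖ ≤ ‖v‖ * ‖mApply M v‖ := norm_inner_le_norm _ _
  nlinarith [norm_nonneg (mApply M v), norm_nonneg v]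

/-- The key estimate: projections change the squared norm by at most twice the distance. -/
lemma proj_sq_diff_le {M : Matrix (Fin n) (Fin n) ℂ}
    (h1 : M.conjTranspose = M) (h2 : M * M = M) (a b : QState n)
    (ha : ‖a‖ ≤ 1) (hb : ‖b‖ ≤ 1) :
    |‖mApply M a‖ ^ 2 - ‖mApply M b‖ ^ 2| ≤ 2 * ‖a - b‖ := by
  have hPa := norm_mApply_proj_le h1 h2 a
  have hPb := norm_mApply_proj_le h1 h2 b
  have hd : |‖mApply M a‖ - ‖mApply M b‖| ≤ ‖a - b‖ := by
    calc |‖mApply M a‖ - ‖mApply M b‖| ≤ ‖mApply M a - mApply M b‖ := abs_norm_sub_norm_le _ _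
      _ = ‖mApply M (a - b)‖ := by rw [mApply_sub]
      _ ≤ ‖a - b‖ := norm_mApply_proj_le h1 h2 _
  rw [abs_le] at hd ⊢
  constructor <;> nlinarith [norm_nonneg (mApply M a), norm_nonneg (mApply M b),
    norm_nonneg (a - b)]

/-- Recurrence: in a finite-dimensional sphere, an isometric-shift sequence returns
arbitrarily late close to any of its points. -/
lemma exists_large_close (x : ℕ → QState n) (hb : ∀ i, ‖x i‖ = 1)
    (hiso : ∀ i j d : ℕ, dist (x (i + d)) (x (j + d)) = dist (x i) (x j))
    (i₀ : ℕ) {η : ℝ} (hη : 0 < η) (N : ℕ) :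
    ∃ d, N ≤ d ∧ dist (x (i₀ + d)) (x i₀) < η := by
  obtain ⟨t, htfin, hcov⟩ :=
    Metric.totallyBounded_iff.mp
      ((isCompact_closedBall (0 : QState n) 1).totallyBounded) (η / 2) (by positivity)
  set D := N + 1 with hD
  have hmem : ∀ j : ℕ, ∃ c ∈ t, x (i₀ + j * D) ∈ Metric.ball c (η / 2) := by
    intro j
    have : x (i₀ + j * D) ∈ Metric.closedBall (0 : QState n) 1 := by
      rw [Metric.mem_closedBall, dist_zero_right, hb]
    have := hcov this
    simpa using this
  choose c hct hcb using hmem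
  haveI := htfin.to_subtype
  obtain ⟨j, j', hne, heq⟩ :=
    Finite.exists_ne_map_eq_of_infinite (fun j : ℕ => (⟨c j, hct j⟩ : t))
  have hdist : ∀ a b : ℕ, c a = c b → dist (x (i₀ + a * D)) (x (i₀ + b * D)) < η := by
    intro a b hcab
    calc dist (x (i₀ + a * D)) (x (i₀ + b * D))
        ≤ dist (x (i₀ + a * D)) (c a) + dist (c a) (x (i₀ + b * D)) := dist_triangle _ _ _
      _ < η / 2 + η / 2 := by
          apply add_lt_add
          · exact Metric.mem_ball.mp (hcb a)
          · rw [dist_comm, hcab]; exact Metric.mem_ball.mp (hcb b)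
      _ = η := by ring
  have hcval : c j = c j' := congrArg Subtype.val heq
  obtain ⟨a, b, hab, hd⟩ : ∃ a b : ℕ, a < b ∧ dist (x (i₀ + a * D)) (x (i₀ + b * D)) < η := by
    rcases hne.lt_or_gt with h | h
    · exact ⟨j, j', h, hdist _ _ hcval⟩
    · exact ⟨j', j, h, hdist _ _ hcval.symm⟩
  set e := b - a with he
  have hbe : b = a + e := by omega
  refine ⟨e * D, ?_, ?_⟩
  · have : 1 ≤ e := by omega
    calc N ≤ D := by omega
      _ = 1 * D := (one_mul _).symm
      _ ≤ e * D := Nat.mul_le_mul_right _ this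
  · have := hiso i₀ (i₀ + e * D) (a * D)
    have harg : i₀ + e * D + a * D = i₀ + b * D := by
      rw [hbe]; ring
    rw [harg] at this
    rw [dist_comm]
    calc dist (x i₀) (x (i₀ + e * D)) = dist (x (i₀ + a * D)) (x (i₀ + b * D)) := this.symm
      _ < η := hd

end Norms

section Words
variable {Alph S : Type} {n : ℕ}

/-- Extended classical transition. -/
def dtr (A : QFAC Alph S n) (s : S) (x : List Alph) : S := x.foldl A.tr s

/-- Word matrix: the total unitary applied when reading `x` from classical state `s`. -/
def wordM (A : QFAC Alph S n) : S → List Alph → Matrix (Fin n) (Fin n) ℂ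
  | _, [] => 1
  | s, σ :: x => wordM A (A.tr s σ) x * A.U s σ

lemma wordM_unitary (A : QFAC Alph S n) : ∀ (x : List Alph) (s : S),
    wordM A s x ∈ Matrix.unitaryGroup (Fin n) ℂ
  | [], _ => by rw [wordM]; exact one_mem _
  | σ :: x, s => by rw [wordM]; exact mul_mem (wordM_unitary A x _) (A.U_unitary s σ)

lemma run_fst (A : QFAC Alph S n) : ∀ (x : List Alph) (s : S) (ψ : QState n),
    (x.foldl (fun p σ => (A.tr p.1 σ, mApply (A.U p.1 σ) p.2)) (s, ψ)).1 = dtr A s x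
  | [], _, _ => rfl
  | σ :: x, s, ψ => by
      simpa [dtr] using run_fst A x (A.tr s σ) (mApply (A.U s σ) ψ)

lemma run_snd (A : QFAC Alph S n) : ∀ (x : List Alph) (s : S) (ψ : QState n),
    (x.foldl (fun p σ => (A.tr p.1 σ, mApply (A.U p.1 σ) p.2)) (s, ψ)).2
      = mApply (wordM A s x) ψ
  | [], s, ψ => by rw [wordM]; exact (mApply_one ψ).symm
  | σ :: x, s, ψ => by
      have := run_snd A x (A.tr s σ) (mApply (A.U s σ) ψ)
      simpa [wordM, mApply_mul] using this

lemma sState_eq (A : QFAC Alph S n) (x : List Alph) : A.sState x = dtr A A.s0 x := rfl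

lemma qState_eq (A : QFAC Alph S n) (x : List Alph) :
    A.qState x = mApply (wordM A A.s0 x) A.ψ0 := run_snd A x _ _

lemma dtr_append (A : QFAC Alph S n) (s : S) (x y : List Alph) :
    dtr A s (x ++ y) = dtr A (dtr A s x) y := List.foldl_append ..

lemma sState_append (A : QFAC Alph S n) (x y : List Alph) :
    A.sState (x ++ y) = dtr A (A.sState x) y := dtr_append ..

lemma qState_append (A : QFAC Alph S n) (x y : List Alph) :
    A.qState (x ++ y) = mApply (wordM A (A.sState x) y) (A.qState x) := by
  unfold QFAC.qState
  rw [List.foldl_append]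
  have hpair : (x.foldl (fun p σ => (A.tr p.1 σ, mApply (A.U p.1 σ) p.2)) (A.s0, A.ψ0))
      = (A.sState x, A.qState x) := Prod.ext (run_fst A x _ _) rfl
  rw [hpair]
  exact run_snd A y _ _

lemma norm_qState (A : QFAC Alph S n) (x : List Alph) : ‖A.qState x‖ = 1 := by
  rw [qState_eq, norm_mApply_unitary (wordM_unitary A x _), A.ψ0_unit]

/-- `v^i`: `i`-fold repetition of the word `v`. -/
def vpow (v : List Alph) : ℕ → List Alph
  | 0 => []
  | i + 1 => vpow v i ++ v

lemma vpow_length (v : List Alph) : ∀ i, (vpow v i).length = i * v.length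
  | 0 => by simp [vpow]
  | i + 1 => by rw [vpow, List.length_append, vpow_length v i]; ring

end Words

section Pump
variable {Alph S : Type} {n : ℕ}

lemma dtr_vpow (A : QFAC Alph S n) {t : S} {v : List Alph} (ht : dtr A t v = t) :
    ∀ i, dtr A t (vpow v i) = t
  | 0 => rfl
  | i + 1 => by rw [vpow, dtr_append, dtr_vpow A ht i, ht]

lemma pump (A : QFAC Alph S n) (L : Set (List Alph)) (lam ε : ℝ)
    (hε : 0 < ε) (hrec : A.Recognizes L lam ε)
    (p v q : List Alph) (hv : v ≠ [])
    (hloop : A.sState (p ++ v) = A.sState p)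
    (i₀ : ℕ) (hu : p ++ vpow v i₀ ++ q ∈ L) (N : ℕ) :
    ∃ y ∈ L, N ≤ y.length := by
  set t := A.sState p with htdef
  have hloop' : dtr A t v = t := by rw [← sState_append]; exact hloop
  set Vm := wordM A t v with hVm
  set Wq := wordM A t q with hWq
  set ψp := A.qState p with hψp
  have hsv : ∀ i, A.sState (p ++ vpow v i) = t := by
    intro i; rw [sState_append, dtr_vpow A hloop' i]
  have hs_i : ∀ i, A.sState (p ++ (vpow v i ++ q)) = dtr A t q := by
    intro i
    rw [← List.append_assoc, sState_append, hsv i]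
  have hx : ∀ i, A.qState (p ++ vpow v i) = mApply (Vm ^ i) ψp := by
    intro i
    induction i with
    | zero => simp [vpow, mApply_one, hψp]
    | succ i ih =>
        have : p ++ vpow v (i + 1) = (p ++ vpow v i) ++ v := by
          rw [vpow, List.append_assoc]
        rw [this, qState_append, hsv i, ih, ← hVm, ← mApply_mul, ← pow_succ']
  have hq : ∀ i, A.qState (p ++ (vpow v i ++ q)) = mApply Wq (mApply (Vm ^ i) ψp) := by
    intro i
    rw [← List.append_assoc, qState_append, hsv i, hx i]
  set x : ℕ → QState n := fun i => mApply (Vm ^ i) ψp with hxdef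
  have hVmpow : ∀ i, Vm ^ i ∈ Matrix.unitaryGroup (Fin n) ℂ :=
    fun i => pow_mem (wordM_unitary A v t) i
  have hxnorm : ∀ i, ‖x i‖ = 1 := by
    intro i
    rw [hxdef]
    simp only []
    rw [norm_mApply_unitary (hVmpow i), hψp, norm_qState]
  have hshift : ∀ i d, x (i + d) = mApply (Vm ^ d) (x i) := by
    intro i d
    simp only [hxdef]
    rw [← mApply_mul, ← pow_add, Nat.add_comm d i]
  have hiso : ∀ i j d : ℕ, dist (x (i + d)) (x (j + d)) = dist (x i) (x j) := by
    intro i j d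
    rw [dist_eq_norm, dist_eq_norm, hshift i d, hshift j d, ← mApply_sub,
      norm_mApply_unitary (hVmpow d)]
  obtain ⟨d, hdN, hclose⟩ := exists_large_close x hxnorm hiso i₀ hε N
  have hP := A.P_proj (dtr A t q)
  have hprob : ∀ i, A.probAcc (p ++ (vpow v i ++ q))
      = ‖mApply (A.P (dtr A t q)) (mApply Wq (x i))‖ ^ 2 := by
    intro i
    rw [QFAC.probAcc, hs_i i, hq i]
  have hWquni := wordM_unitary A q t
  have hynorm : ∀ i, ‖mApply Wq (x i)‖ ≤ 1 := by
    intro i; rw [norm_mApply_unitary hWquni, hxnorm i]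
  have hdiff : |A.probAcc (p ++ (vpow v (i₀ + d) ++ q)) - A.probAcc (p ++ (vpow v i₀ ++ q))|
      ≤ 2 * dist (x (i₀ + d)) (x i₀) := by
    rw [hprob, hprob]
    have := proj_sq_diff_le hP.1 hP.2 (mApply Wq (x (i₀ + d))) (mApply Wq (x i₀))
      (hynorm _) (hynorm _)
    rw [← mApply_sub, norm_mApply_unitary hWquni, ← dist_eq_norm] at this
    exact this
  have hub : lam + ε ≤ A.probAcc (p ++ (vpow v i₀ ++ q)) := by
    apply hrec.1
    rw [List.append_assoc] at hu
    exact hu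
  have habs := abs_le.mp hdiff
  have hgt : lam - ε < A.probAcc (p ++ (vpow v (i₀ + d) ++ q)) := by
    nlinarith [hclose]
  have hmem : p ++ (vpow v (i₀ + d) ++ q) ∈ L := by
    by_contra hnot
    have := hrec.2 _ hnot
    linarith
  refine ⟨_, hmem, ?_⟩
  have hvpos : 0 < v.length := List.length_pos_iff.mpr hv
  have hlen : (p ++ (vpow v (i₀ + d) ++ q)).length
      = p.length + ((i₀ + d) * v.length + q.length) := by
    rw [List.length_append, List.length_append, vpow_length]
  have : d ≤ (i₀ + d) * v.length := by
    calc d ≤ i₀ + d := by omega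
      _ = (i₀ + d) * 1 := (Nat.mul_one _).symm
      _ ≤ (i₀ + d) * v.length := Nat.mul_le_mul_left _ hvpos
  omega

end Pump

section Loop
variable {Alph S : Type} {n : ℕ}

lemma exists_loop (A : QFAC Alph S n) [Fintype S] (σ₀ : Alph) (u : List Alph)
    (hlen : Fintype.card S ≤ u.length + 1) :
    ∃ p v q : List Alph, v ≠ [] ∧ A.sState (p ++ v) = A.sState p ∧
      ∃ i₀, u = p ++ vpow v i₀ ++ q := by
  classical
  set w := u ++ [σ₀] with hw
  have hwlen : w.length = u.length + 1 := by simp [hw]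
  have hcard : Fintype.card S < Fintype.card (Fin (u.length + 2)) := by
    rw [Fintype.card_fin]; omega
  obtain ⟨a0, b0, hne, heq0⟩ :=
    Fintype.exists_ne_map_eq_of_card_lt
      (fun i : Fin (u.length + 2) => A.sState (w.take i)) hcard
  obtain ⟨a, b, hab, heq⟩ : ∃ a b : Fin (u.length + 2), a < b ∧
      A.sState (w.take a) = A.sState (w.take b) := by
    rcases hne.lt_or_gt with h | h
    · exact ⟨a0, b0, h, heq0⟩
    · exact ⟨b0, a0, h, heq0.symm⟩
  have hbw : (b : ℕ) ≤ w.length := by rw [hwlen]; omega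
  have habn : (a : ℕ) < (b : ℕ) := hab
  set p := w.take a with hp
  set v := (w.take b).drop a with hvdef
  have hpv : p ++ v = w.take b := by
    rw [hp, hvdef]
    have h1 : (w.take (b : ℕ)).take (a : ℕ) = w.take (a : ℕ) := by
      rw [List.take_take, min_eq_left habn.le]
    rw [← h1]
    exact List.take_append_drop _ _
  have hvne : v ≠ [] := by
    have hlv : v.length = (b : ℕ) - a := by
      rw [hvdef, List.length_drop, List.length_take, min_eq_left hbw]
    intro hcon
    rw [hcon] at hlv
    simp at hlv
    omega
  have hloop : A.sState (p ++ v) = A.sState p := by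
    rw [hpv, hp]; exact heq.symm
  by_cases hble : (b : ℕ) ≤ u.length
  · refine ⟨p, v, u.drop b, hvne, hloop, 1, ?_⟩
    have hv1 : vpow v 1 = v := by simp [vpow]
    have htb : w.take (b : ℕ) = u.take (b : ℕ) := by
      rw [hw]; exact List.take_append_of_le_length hble
    rw [hv1, hpv, htb]
    exact (List.take_append_drop _ _).symm
  · have hb : (b : ℕ) = u.length + 1 := by omega
    have han : (a : ℕ) ≤ u.length := by omega
    refine ⟨p, v, u.drop a, hvne, hloop, 0, ?_⟩
    have hv0 : vpow v 0 = [] := rfl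
    have hta : w.take (a : ℕ) = u.take (a : ℕ) := by
      rw [hw]; exact List.take_append_of_le_length han
    rw [hv0, List.append_nil, hp, hta]
    exact (List.take_append_drop _ _).symm

end Loop

section Count

lemma quot_card_le {α : Type} [Fintype α] (L : Set (List α)) (σ₀ : α)
    (w : List α) (hw : w ∈ L) (hmax : ∀ u ∈ L, u.length ≤ w.length) :
    Nat.card (Quotient (mnSetoid L)) ≤ (∑ i : Fin w.length, Fintype.card α ^ (i : ℕ)) + 2 := by
  classical
  have hlong : ∀ y : List α, w.length < y.length → y ∉ L := by
    intro y hy hmem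
    have := hmax y hmem
    omega
  set g : (Σ i : Fin w.length, (Fin (i : ℕ) → α)) ⊕ Bool → Quotient (mnSetoid L) :=
    Sum.elim (fun s => Quotient.mk (mnSetoid L) (List.ofFn s.2))
      (fun b => if b then Quotient.mk (mnSetoid L) w
        else Quotient.mk (mnSetoid L) (w ++ [σ₀])) with hg
  have hsurj : Function.Surjective g := by
    intro c
    obtain ⟨x, rfl⟩ := c.exists_rep
    by_cases hx : x.length < w.length
    · refine ⟨Sum.inl ⟨⟨x.length, hx⟩, fun i => x.get ⟨i, i.2⟩⟩, ?_⟩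
      rw [hg]
      simp only [Sum.elim_inl]
      congr 1
      exact List.ofFn_get x
    · push_neg at hx
      by_cases hxL : x ∈ L
      · refine ⟨Sum.inr true, ?_⟩
        rw [hg]
        simp only [Sum.elim_inr, if_true]
        apply Quotient.sound
        intro z
        cases z with
        | nil =>
            rw [List.append_nil, List.append_nil]
            exact iff_of_true hw hxL
        | cons h t =>
            apply iff_of_false
            · apply hlong
              simp only [List.length_append, List.length_cons]
              omega
            · apply hlong
              simp only [List.length_append, List.length_cons]
              omega
      · refine ⟨Sum.inr false, ?_⟩
        rw [hg]
        simp only [Sum.elim_inr, if_false, Bool.false_eq_true]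
        apply Quotient.sound
        intro z
        apply iff_of_false
        · apply hlong
          simp only [List.length_append, List.length_cons, List.length_nil]
          omega
        · cases z with
          | nil => rw [List.append_nil]; exact hxL
          | cons h t =>
              apply hlong
              simp only [List.length_append, List.length_cons]
              omega
  have h1 := Nat.card_le_card_of_surjective g hsurj
  have h2 : Nat.card ((Σ i : Fin w.length, (Fin (i : ℕ) → α)) ⊕ Bool)
      = Fintype.card ((Σ i : Fin w.length, (Fin (i : ℕ) → α)) ⊕ Bool) :=
    Nat.card_eq_fintype_card
  rw [h2] at h1
  refine le_trans h1 (le_of_eq ?_)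
  simp [Fintype.card_sum, Fintype.card_sigma, Fintype.card_fun, Fintype.card_bool]

lemma sum_pow_le (c : ℕ) (hc : 2 ≤ c) : ∀ ℓ : ℕ, (∑ i : Fin ℓ, c ^ (i : ℕ)) + 2 ≤ 2 * c ^ ℓ
  | 0 => by simp
  | ℓ + 1 => by
    have ih := sum_pow_le c hc ℓ
    have h1 : 1 ≤ c ^ ℓ := Nat.one_le_pow _ _ (by omega)
    rw [Fin.sum_univ_castSucc]
    simp only [Fin.coe_castSucc, Fin.val_last]
    rw [pow_succ]
    nlinarith

end Count

end QFACAux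

/-- For `|Alph| ≥ 2` and a nonempty finite language `L` whose
Myhill–Nerode equivalence has exactly `m` classes, any 1QFAC with `k` classical states
recognizing `L` with isolated cut-point satisfies `m ≤ 2|Alph|^(k−2)`. -/
theorem stmt_8 {Alph S : Type} [Fintype Alph] (hAlph : 2 ≤ Fintype.card Alph)
    [Fintype S] {n k m : ℕ} (hk : Fintype.card S = k)
    (L : Set (List Alph)) (hLfin : L.Finite) (hLne : L.Nonempty)
    (hm : Nat.card (Quotient (mnSetoid L)) = m)
    (A : QFAC Alph S n) (lam ε : ℝ) (hlam : 0 < lam ∧ lam < 1) (hε : 0 < ε)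
    (hrec : A.Recognizes L lam ε) :
    m ≤ 2 * Fintype.card Alph ^ (k - 2) := by
  classical
  subst hk
  subst hm
  have hAne : Nonempty Alph := by
    have : 0 < Fintype.card Alph := by omega
    exact Fintype.card_pos_iff.mp this
  obtain ⟨σ₀⟩ := hAne
  obtain ⟨M, hM⟩ := (hLfin.image List.length).bddAbove
  have hMbound : ∀ y ∈ L, y.length ≤ M := fun y hy => hM (Set.mem_image_of_mem _ hy)
  have key : ∀ u ∈ L, u.length + 2 ≤ Fintype.card S := by
    intro u hu
    by_contra hcon
    push_neg at hcon
    have hlen : Fintype.card S ≤ u.length + 1 := by omega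
    obtain ⟨p, v, q, hv, hloop, i₀, hueq⟩ := QFACAux.exists_loop A σ₀ u hlen
    rw [hueq] at hu
    obtain ⟨y, hyL, hylen⟩ := QFACAux.pump A L lam ε hε hrec p v q hv hloop i₀ hu (M + 1)
    have := hMbound y hyL
    omega
  obtain ⟨w, hwL, hwmax⟩ := Set.exists_max_image L List.length hLfin hLne
  have h1 := QFACAux.quot_card_le L σ₀ w hwL hwmax
  have h2 := QFACAux.sum_pow_le (Fintype.card Alph) hAlph w.length
  have h3 : w.length ≤ Fintype.card S - 2 := by
    have := key w hwL; omega
  have h4 : Fintype.card Alph ^ w.length ≤ Fintype.card Alph ^ (Fintype.card S - 2) :=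
    Nat.pow_le_pow_right (by omega) h3
  calc Nat.card (Quotient (mnSetoid L))
      ≤ (∑ i : Fin w.length, Fintype.card Alph ^ (i : ℕ)) + 2 := h1
    _ ≤ 2 * Fintype.card Alph ^ w.length := h2
    _ ≤ 2 * Fintype.card Alph ^ (Fintype.card S - 2) := Nat.mul_le_mul_left 2 h4

end
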